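/- For A ∈ ℝ^{n×n}, b ∈ ℝ^n, τ > 0, and 0 ≤ t ≤ τ, define G(A,t) = ∫₀ᵗ e^{A(t−s)} ds. Then ‖G(A,t)b − (t/τ)G(A,τ)b‖ ≤ (t/τ)·(e^{τ‖A‖} − 1 − τ‖A‖)·‖b‖/‖A‖, provided ‖A‖ > 0. -/

import Mathlib

open NormedSpace intervalIntegral

set_option maxHeartbeats 1000000
set_option synthInstance.maxHeartbeats 200000

/-- Key estimate: `‖e^{xA} - e^{yA}‖ ≤ e^{y‖A‖} - 1` for `0 ≤ x ≤ y`. -/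
lemma exp_smul_sub_exp_smul_norm_le {n : ℕ} (A : (Fin n → ℝ) →L[ℝ] (Fin n → ℝ))
    {x y : ℝ} (hx : 0 ≤ x) (hxy : x ≤ y) :
    ‖NormedSpace.exp (x • A) - NormedSpace.exp (y • A)‖ ≤ Real.exp (y * ‖A‖) - 1 := by
  have hy : 0 ≤ y := hx.trans hxy
  have h1 : HasSum (fun k : ℕ => (k.factorial⁻¹ : ℝ) • (x • A) ^ k)
      (NormedSpace.exp (x • A)) := NormedSpace.exp_series_hasSum_exp' _
  have h2 : HasSum (fun k : ℕ => (k.factorial⁻¹ : ℝ) • (y • A) ^ k)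
      (NormedSpace.exp (y • A)) := NormedSpace.exp_series_hasSum_exp' _
  have hdiff := h1.sub h2
  -- the bounding series
  have hexp : HasSum (fun k : ℕ => (y * ‖A‖) ^ k / k.factorial) (Real.exp (y * ‖A‖)) := by
    have := NormedSpace.expSeries_div_hasSum_exp (y * ‖A‖)
    rwa [← Real.exp_eq_exp_ℝ] at this
  have hg : HasSum (Function.update (fun k : ℕ => (y * ‖A‖) ^ k / k.factorial) 0 0)
      (Real.exp (y * ‖A‖) - 1) := by
    have h := hexp.update 0 0
    have h0 : (0 : ℝ) - (y * ‖A‖) ^ (0:ℕ) / (0:ℕ).factorial + Real.exp (y * ‖A‖)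
        = Real.exp (y * ‖A‖) - 1 := by simp; ring
    rwa [h0] at h
  rw [← hdiff.tsum_eq]
  refine tsum_of_norm_bounded hg ?_
  intro k
  match k with
  | 0 => simp
  | (k + 1) =>
    rw [Function.update_of_ne (Nat.succ_ne_zero k)]
    have hrw : (((k+1).factorial⁻¹ : ℝ)) • (x • A) ^ (k+1) - (((k+1).factorial⁻¹ : ℝ)) • (y • A) ^ (k+1)
        = ((((k+1).factorial : ℝ))⁻¹ * x ^ (k+1) - (((k+1).factorial : ℝ))⁻¹ * y ^ (k+1)) • A ^ (k+1) := by
      rw [smul_pow, smul_pow, smul_smul, smul_smul]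
      exact (sub_smul _ _ _).symm
    have hns := norm_smul ((((k+1).factorial : ℝ))⁻¹ * x ^ (k+1) - (((k+1).factorial : ℝ))⁻¹ * y ^ (k+1)) (A ^ (k+1))
    rw [Real.norm_eq_abs] at hns
    rw [hrw, hns]
    have hAk : ‖A ^ (k + 1)‖ ≤ ‖A‖ ^ (k + 1) := norm_pow_le' A (Nat.succ_pos k)
    have hxk : x ^ (k + 1) ≤ y ^ (k + 1) := pow_le_pow_left₀ hx hxy _
    have hxk0 : (0:ℝ) ≤ x ^ (k + 1) := pow_nonneg hx _
    have hfacpos : (0:ℝ) < ((k+1).factorial : ℝ) := by positivity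
    have habs : |(((k+1).factorial : ℝ)⁻¹ * x ^ (k+1) - ((k+1).factorial : ℝ)⁻¹ * y ^ (k+1))|
        = ((k+1).factorial : ℝ)⁻¹ * (y ^ (k+1) - x ^ (k+1)) := by
      rw [abs_of_nonpos (by nlinarith [inv_nonneg.2 hfacpos.le])]
      ring
    rw [habs]
    have hA0 : (0:ℝ) ≤ ‖A‖ ^ (k+1) := by positivity
    calc ((k+1).factorial : ℝ)⁻¹ * (y ^ (k+1) - x ^ (k+1)) * ‖A ^ (k+1)‖
        ≤ ((k+1).factorial : ℝ)⁻¹ * (y ^ (k+1)) * ‖A‖ ^ (k+1) := by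
          have h1 : (0:ℝ) ≤ ((k+1).factorial : ℝ)⁻¹ * (y ^ (k+1) - x ^ (k+1)) := by
            have := sub_nonneg.2 hxk
            positivity
          have h2 : ((k+1).factorial : ℝ)⁻¹ * (y ^ (k+1) - x ^ (k+1))
              ≤ ((k+1).factorial : ℝ)⁻¹ * (y ^ (k+1)) := by
            apply mul_le_mul_of_nonneg_left _ (by positivity)
            linarith
          nlinarith [norm_nonneg (A ^ (k+1))]
      _ = (y * ‖A‖) ^ (k+1) / ((k+1).factorial : ℝ) := by
          rw [mul_pow]; ring

/-- With `G(A,t) = ∫₀ᵗ e^{A(t−s)} ds`, the bound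
`‖G(A,t)b − (t/τ)G(A,τ)b‖ ≤ (t/τ)(e^{τ‖A‖} − 1 − τ‖A‖)‖b‖/‖A‖` holds for `0 ≤ t ≤ τ`. -/
theorem stmt4 (n : ℕ) (A : (Fin n → ℝ) →L[ℝ] (Fin n → ℝ)) (hA : 0 < ‖A‖)
    (b : Fin n → ℝ) (τ t : ℝ) (hτ : 0 < τ) (ht0 : 0 ≤ t) (htτ : t ≤ τ) :
    ‖(∫ s in (0 : ℝ)..t, (NormedSpace.exp ((t - s) • A)) b) -
        (t / τ) • (∫ s in (0 : ℝ)..τ, (NormedSpace.exp ((τ - s) • A)) b)‖ ≤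
      (t / τ) * (Real.exp (τ * ‖A‖) - 1 - τ * ‖A‖) * ‖b‖ / ‖A‖ := by
  set a := ‖A‖ with ha
  set f : ℝ → (Fin n → ℝ) := fun r => (NormedSpace.exp (r • A)) b with hf
  have hfcont : Continuous f := by
    have h1 : Continuous fun r : ℝ => NormedSpace.exp (r • A) :=
      (show Continuous (NormedSpace.exp : ((Fin n → ℝ) →L[ℝ] (Fin n → ℝ)) → ((Fin n → ℝ) →L[ℝ] (Fin n → ℝ))) by
        rw [← continuousOn_univ, ← Metric.eball_top_eq_univ (0 : ((Fin n → ℝ) →L[ℝ] (Fin n → ℝ))),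
          ← NormedSpace.expSeries_radius_eq_top ℝ ((Fin n → ℝ) →L[ℝ] (Fin n → ℝ))]
        exact NormedSpace.continuousOn_exp).comp (continuous_id.smul continuous_const)
    exact h1.clm_apply continuous_const
  -- change of variables s ↦ c - s
  have key : ∀ c : ℝ, (∫ s in (0:ℝ)..c, (NormedSpace.exp ((c - s) • A)) b)
      = ∫ r in (0:ℝ)..c, f r := by
    intro c
    have h := intervalIntegral.integral_comp_sub_left (a := (0:ℝ)) (b := c) f c
    rw [sub_self, sub_zero] at h
    exact h
  -- scaling r = c * u
  have scale : ∀ c : ℝ, c ≠ 0 → (∫ r in (0:ℝ)..c, f r) = c • ∫ u in (0:ℝ)..1, f (c * u) := by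
    intro c hc
    rw [intervalIntegral.integral_comp_mul_left f hc, mul_zero, mul_one, smul_smul,
      mul_inv_cancel₀ hc, one_smul]
  rcases eq_or_lt_of_le ht0 with h0 | ht
  · -- t = 0
    subst h0
    simp
  · -- t > 0
    have hint : ∀ c : ℝ, IntervalIntegrable (fun u => f (c * u)) MeasureTheory.volume 0 1 :=
      fun c => (hfcont.comp (continuous_const.mul continuous_id)).intervalIntegrable _ _
    have hdiff : (∫ s in (0:ℝ)..t, (NormedSpace.exp ((t - s) • A)) b) -
        (t / τ) • (∫ s in (0:ℝ)..τ, (NormedSpace.exp ((τ - s) • A)) b)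
        = t • ∫ u in (0:ℝ)..1, (f (t * u) - f (τ * u)) := by
      rw [key t, key τ, scale t ht.ne', scale τ hτ.ne', smul_smul, div_mul_cancel₀ _ hτ.ne',
        intervalIntegral.integral_sub (hint t) (hint τ), smul_sub]
    rw [hdiff, norm_smul, Real.norm_eq_abs, abs_of_pos ht]
    have hGcont : Continuous fun u : ℝ => (Real.exp (τ * a * u) - 1) * ‖b‖ :=
      ((Real.continuous_exp.comp (continuous_const.mul continuous_id)).sub
        continuous_const).mul continuous_const
    -- bound the integral
    have hbound : ‖∫ u in (0:ℝ)..1, (f (t * u) - f (τ * u))‖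
        ≤ |∫ u in (0:ℝ)..1, (Real.exp (τ * a * u) - 1) * ‖b‖| := by
      apply intervalIntegral.norm_integral_le_abs_of_norm_le
      · filter_upwards [MeasureTheory.ae_restrict_mem measurableSet_uIoc] with u hu
        have hu' : u ∈ Set.Ioc (0:ℝ) 1 := by rwa [Set.uIoc_of_le (by norm_num)] at hu
        have hu0 : 0 < u := hu'.1
        have hu1 : u ≤ 1 := hu'.2
        have h1 : f (t * u) - f (τ * u)
            = (NormedSpace.exp ((t * u) • A) - NormedSpace.exp ((τ * u) • A)) b := by
          simp [hf, ContinuousLinearMap.sub_apply]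
        rw [h1]
        calc ‖(NormedSpace.exp ((t * u) • A) - NormedSpace.exp ((τ * u) • A)) b‖
            ≤ ‖NormedSpace.exp ((t * u) • A) - NormedSpace.exp ((τ * u) • A)‖ * ‖b‖ :=
              ContinuousLinearMap.le_opNorm _ _
          _ ≤ (Real.exp ((τ * u) * a) - 1) * ‖b‖ := by
              apply mul_le_mul_of_nonneg_right _ (norm_nonneg b)
              exact exp_smul_sub_exp_smul_norm_le A (by positivity) (by nlinarith)
          _ = (Real.exp (τ * a * u) - 1) * ‖b‖ := by ring_nf
      · exact hGcont.intervalIntegrable _ _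
    -- compute the integral of the bound
    have hτa : τ * a ≠ 0 := by positivity
    have hInt : (∫ u in (0:ℝ)..1, (Real.exp (τ * a * u) - 1) * ‖b‖)
        = ((Real.exp (τ * a) - 1) / (τ * a) - 1) * ‖b‖ := by
      rw [intervalIntegral.integral_mul_const]
      congr 1
      rw [intervalIntegral.integral_sub _ intervalIntegrable_const]
      · have hx : (∫ u in (0:ℝ)..1, Real.exp (τ * a * u))
            = (τ * a)⁻¹ * (Real.exp (τ * a) - 1) := by
          rw [intervalIntegral.integral_comp_mul_left Real.exp hτa, mul_zero, mul_one,
            integral_exp, Real.exp_zero, smul_eq_mul]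
        rw [hx, intervalIntegral.integral_const]
        field_simp
        simp
      · exact (Real.continuous_exp.comp (continuous_const.mul continuous_id)).intervalIntegrable _ _
    have hnonneg : (0:ℝ) ≤ ((Real.exp (τ * a) - 1) / (τ * a) - 1) * ‖b‖ := by
      apply mul_nonneg _ (norm_nonneg b)
      rw [sub_nonneg, le_div_iff₀ (by positivity), one_mul]
      linarith [Real.add_one_le_exp (τ * a)]
    rw [hInt, abs_of_nonneg hnonneg] at hbound
    have hfinal : t * (((Real.exp (τ * a) - 1) / (τ * a) - 1) * ‖b‖)
        = t / τ * (Real.exp (τ * a) - 1 - τ * a) * ‖b‖ / a := by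
      field_simp
    calc t * ‖∫ u in (0:ℝ)..1, (f (t * u) - f (τ * u))‖
        ≤ t * (((Real.exp (τ * a) - 1) / (τ * a) - 1) * ‖b‖) :=
          mul_le_mul_of_nonneg_left hbound ht0
      _ = t / τ * (Real.exp (τ * a) - 1 - τ * a) * ‖b‖ / a := hfinal
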